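/- For every a ∈ ℝ \ {0}, the set Λ_a is countably infinite, consists of isolated points, and for each c ∈ ℝ the set {λ ∈ Λ_a : Re(λ) ≥ c} is finite; in particular v0(a) = sup{Re(λ) : λ ∈ Λ_a} < ∞. -/

import Mathlib

open MeasureTheory Topology Filter
open scoped NNReal

/-- The characteristic function `h_a(λ) = λ − a ∫_{−1}^0 e^{λu} du`. -/
noncomputable def charFn (a : ℝ) (lam : ℂ) : ℂ :=
  lam - a * ∫ u in (-1:ℝ)..0, Complex.exp (lam * u)

/-- The set `Λ_a` of complex solutions of the characteristic equation. -/
def charRoots (a : ℝ) : Set ℂ := {lam | charFn a lam = 0}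

noncomputable def Fa (a : ℝ) (z : ℂ) : ℂ := z^2 - (a:ℂ) + a * Complex.exp (-z)

lemma charRoots_eq (a : ℝ) (ha : a ≠ 0) :
    charRoots a = {z | Fa a z = 0 ∧ z ≠ 0} := by
  ext z
  by_cases hz : z = 0
  · subst hz
    simp only [charRoots, Set.mem_setOf_eq, charFn, Fa]
    constructor
    · intro h
      exfalso
      simp only [zero_mul, Complex.exp_zero] at h
      rw [intervalIntegral.integral_const] at h
      simp at h
      exact ha h
    · rintro ⟨-, h⟩; exact absurd rfl h
  · simp only [charRoots, Set.mem_setOf_eq, charFn, Fa]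
    rw [integral_exp_mul_complex hz]
    have h0 : (z : ℂ) * ((0:ℝ):ℂ) = 0 := by norm_num
    have h1 : (z : ℂ) * ((-1:ℝ):ℂ) = -z := by push_cast; ring
    rw [h0, h1, Complex.exp_zero]
    have key : z - (a:ℂ) * ((1 - Complex.exp (-z)) / z)
        = (z^2 - (a:ℂ) + (a:ℂ) * Complex.exp (-z))/z := by
      field_simp; ring
    rw [key, div_eq_zero_iff]
    constructor
    · rintro (h | h)
      · exact ⟨h, hz⟩
      · exact absurd h hz
    · rintro ⟨h, -⟩; exact Or.inl h

lemma Fa_differentiable (a : ℝ) : Differentiable ℂ (Fa a) := by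
  unfold Fa
  fun_prop

lemma Fa_ne_at (a : ℝ) (ha : a ≠ 0) : Fa a ((|a| + 1 : ℝ) : ℂ) ≠ 0 := by
  unfold Fa
  have : ((((|a| + 1:ℝ)):ℂ)^2 - (a:ℂ) + a * Complex.exp (-((|a|+1:ℝ):ℂ)))
      = (((|a|+1)^2 - a + a * Real.exp (-(|a|+1)) : ℝ) : ℂ) := by
    push_cast [← Complex.ofReal_exp]
    ring_nf
    rw [show (-1 : ℂ) - ((|a|:ℝ):ℂ) = (((-1 - |a|:ℝ)):ℂ) by push_cast; ring, ← Complex.ofReal_exp]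
  rw [this]
  rw [Complex.ofReal_ne_zero]
  have h1 : Real.exp (-(|a|+1)) ≤ 1 := Real.exp_le_one_iff.mpr (by nlinarith [abs_nonneg a])
  have h2 : 0 < Real.exp (-(|a|+1)) := Real.exp_pos _
  have h3 : -|a| ≤ a := neg_abs_le a
  have h4 : a ≤ |a| := le_abs_self a
  nlinarith [abs_nonneg a, sq_nonneg (|a| - a)]

lemma Fa_zeros_ball_finite (a : ℝ) (ha : a ≠ 0) (R : ℝ) :
    ({z | Fa a z = 0} ∩ Metric.closedBall 0 R).Finite := by
  by_contra hinf
  have hinf2 : Set.Infinite ({z | Fa a z = 0} ∩ Metric.closedBall 0 R) := hinf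
  obtain ⟨x, -, hx⟩ := hinf2.exists_accPt_of_subset_isCompact
    (isCompact_closedBall (0:ℂ) R) Set.inter_subset_right
  have hfreq : ∃ᶠ z in 𝓝[≠] x, Fa a z = 0 := by
    rw [accPt_iff_frequently] at hx
    rw [frequently_nhdsWithin_iff]
    exact hx.mono (fun z hz => ⟨hz.2.1, hz.1⟩)
  have hzero : Set.EqOn (Fa a) 0 Set.univ :=
    (Complex.analyticOnNhd_univ_iff_differentiable.mpr (Fa_differentiable a)).eqOn_zero_of_preconnected_of_frequently_eq_zero
      isPreconnected_univ (Set.mem_univ x) hfreq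
  exact Fa_ne_at a ha (hzero (Set.mem_univ _))

lemma eventually_good (a : ℝ) (ha : a ≠ 0) :
    ∀ᶠ x : ℝ in atTop,
      1 ≤ (a + x^2)/|a| ∧
      (1 + Real.log ((a + x^2)/|a|)) * ((1 + Real.log ((a + x^2)/|a|)) + 2*x)
        ≤ (a + x^2)/2 ∧
      8*(x + (1 + Real.log ((a + x^2)/|a|))) ≤ a + x^2 := by
  have hA : 0 < |a| := abs_pos.mpr ha
  set ε : ℝ := min (1/100) (Real.sqrt |a|/100) with hε
  have hsA : 0 < Real.sqrt |a| := Real.sqrt_pos.mpr hA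
  have hεpos : 0 < ε := lt_min (by norm_num) (by positivity)
  have hlog : ∀ᶠ y : ℝ in atTop, Real.log y ≤ ε * y := by
    filter_upwards [Real.isLittleO_log_id_atTop.bound hεpos, eventually_ge_atTop (0:ℝ)]
      with y hy hy0
    calc Real.log y ≤ |Real.log y| := le_abs_self _
      _ ≤ ε * |y| := by simpa [Real.norm_eq_abs] using hy
      _ = ε * y := by rw [abs_of_nonneg hy0]
  have hu : Tendsto (fun x : ℝ => (a + x^2)/|a|) atTop atTop := by
    apply Tendsto.atTop_div_const hA
    exact tendsto_atTop_add_const_left _ a (tendsto_pow_atTop (two_ne_zero))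
  have hsqrt_atTop : Tendsto Real.sqrt atTop atTop := by
    rw [tendsto_atTop_atTop]
    intro b
    refine ⟨b^2, fun y hy => ?_⟩
    calc b ≤ |b| := le_abs_self b
      _ = Real.sqrt (b^2) := (Real.sqrt_sq_eq_abs b).symm
      _ ≤ Real.sqrt y := Real.sqrt_le_sqrt hy
  have hsqu : Tendsto (fun x : ℝ => Real.sqrt ((a + x^2)/|a|)) atTop atTop :=
    hsqrt_atTop.comp hu
  have hev : ∀ᶠ x : ℝ in atTop,
      Real.log (Real.sqrt ((a + x^2)/|a|)) ≤ ε * Real.sqrt ((a + x^2)/|a|) :=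
    hsqu.eventually hlog
  have husmall : ∀ᶠ x : ℝ in atTop, 1 ≤ (a + x^2)/|a| := hu.eventually_ge_atTop 1
  filter_upwards [hev, husmall, eventually_ge_atTop (100 + 100*|a|)] with x hx hx1 hxbig
  have hx0 : (0:ℝ) ≤ x := by nlinarith [abs_nonneg a]
  have hu0 : (0:ℝ) < (a + x^2)/|a| := lt_of_lt_of_le one_pos hx1
  have haxpos : 0 < a + x^2 := by
    have := mul_pos hu0 hA
    rwa [div_mul_cancel₀ _ (ne_of_gt hA)] at this
  -- bound on sqrt u
  have hsqb : Real.sqrt ((a + x^2)/|a|) ≤ 1 + x / Real.sqrt |a| := by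
    have h1 : (a + x^2)/|a| ≤ ((1 + x / Real.sqrt |a|))^2 := by
      have h2 : (x / Real.sqrt |a|)^2 = x^2/|a| := by
        rw [div_pow, Real.sq_sqrt (le_of_lt hA)]
      have h3 : (a + x^2)/|a| ≤ 1 + x^2/|a| := by
        have he : 1 + x^2/|a| = (|a| + x^2)/|a| := by field_simp
        rw [he]
        gcongr
        exact le_abs_self a
      rw [← h2] at h3
      nlinarith [div_nonneg hx0 hsA.le]
    calc Real.sqrt ((a + x^2)/|a|) ≤ Real.sqrt ((1 + x / Real.sqrt |a|)^2) :=
          Real.sqrt_le_sqrt h1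
      _ = 1 + x / Real.sqrt |a| := Real.sqrt_sq (by positivity)
  -- bound on log u
  have hlogu : Real.log ((a + x^2)/|a|) ≤ 2 + x/50 := by
    have h1 : Real.log ((a + x^2)/|a|) = 2 * Real.log (Real.sqrt ((a + x^2)/|a|)) := by
      rw [Real.log_sqrt (le_of_lt hu0)]; ring
    rw [h1]
    have h2 : Real.log (Real.sqrt ((a + x^2)/|a|)) ≤ ε * (1 + x / Real.sqrt |a|) :=
      le_trans hx (by nlinarith [Real.sqrt_nonneg ((a + x^2)/|a|)])
    have h3 : ε ≤ 1/100 := min_le_left _ _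
    have h4 : ε ≤ Real.sqrt |a|/100 := min_le_right _ _
    have h5 : ε * (x / Real.sqrt |a|) ≤ x/100 := by
      rw [mul_div_assoc']
      rw [div_le_div_iff₀ hsA (by norm_num)]
      calc ε * x * 100 ≤ (Real.sqrt |a|/100) * x * 100 := by nlinarith
        _ = x * Real.sqrt |a| := by ring
    nlinarith
  set L := 1 + Real.log ((a + x^2)/|a|) with hL
  clear_value L
  have hLb : L ≤ 3 + x/50 := by rw [hL]; linarith
  have hL0 : 0 ≤ L := by
    have := Real.log_nonneg hx1; rw [hL]; linarith
  have hab : -|a| ≤ a := neg_abs_le a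
  have habx : |a| ≤ x := by nlinarith [abs_nonneg a]
  have hx2 : x*(100 + 100*|a|) ≤ x*x := mul_le_mul_of_nonneg_left hxbig hx0
  have hprod : L * (L + 2*x) ≤ (3 + x/50) * ((3 + x/50) + 2*x) :=
    mul_le_mul hLb (by linarith) (by linarith) (by linarith)
  refine ⟨hx1, ?_, ?_⟩
  · nlinarith [abs_nonneg a]
  · have h1x : (1:ℝ) ≤ x := by nlinarith [abs_nonneg a]
    have h2x : |a| * 1 ≤ |a| * x := mul_le_mul_of_nonneg_left h1x (abs_nonneg a)
    nlinarith [abs_nonneg a]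

lemma exists_root_large (a : ℝ) (ha : a ≠ 0) (R : ℝ) : ∃ z ∈ charRoots a, R < ‖z‖ := by
  have hA : 0 < |a| := abs_pos.mpr ha
  obtain ⟨x₀, hx₀⟩ := (eventually_good a ha).exists_forall_of_atTop
  obtain ⟨k, hk⟩ := exists_nat_ge (max (max x₀ (R+2)) 2)
  -- parity-adjusted integer
  set m : ℕ := 2*k + (if 0 < a then 0 else 1) with hm
  have hmk : (k:ℝ) ≤ (m:ℝ) := by
    have : k ≤ m := by omega
    exact_mod_cast this
  set P : ℝ := (m:ℝ) * Real.pi with hP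
  have hpi : (1:ℝ) ≤ Real.pi := by
    have := Real.pi_gt_three; linarith
  have hkx : x₀ ≤ (k:ℝ) := le_trans (le_trans (le_max_left _ _) (le_max_left _ _)) hk
  have hkR : R + 2 ≤ (k:ℝ) := le_trans (le_trans (le_max_right _ _) (le_max_left _ _)) hk
  have hk2 : (2:ℝ) ≤ (k:ℝ) := le_trans (le_max_right _ _) hk
  have hm0 : (0:ℝ) ≤ (m:ℝ) := Nat.cast_nonneg m
  have hPk : (k:ℝ) ≤ P := by
    calc (k:ℝ) ≤ (m:ℝ) := hmk
      _ = (m:ℝ) * 1 := by ring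
      _ ≤ (m:ℝ) * Real.pi := by
          apply mul_le_mul_of_nonneg_left hpi hm0
  have hP0 : (0:ℝ) ≤ P := le_trans (by positivity) hPk
  -- good conditions at x = P
  obtain ⟨hF1, hF2, hF3⟩ := hx₀ P (le_trans hkx hPk)
  set D : ℝ := a + P^2 with hD
  set v₀ : ℝ := D / |a| with hv₀
  set L : ℝ := 1 + Real.log v₀ with hLdef
  have hDpos : 0 < D := by
    have := mul_le_mul_of_nonneg_right hF1 (le_of_lt hA)
    rw [one_mul, div_mul_cancel₀ _ (ne_of_gt hA)] at this
    linarith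
  have hv₀pos : 0 < v₀ := lt_of_lt_of_le one_pos hF1
  have hlogv : 0 ≤ Real.log v₀ := Real.log_nonneg hF1
  have hL1 : 1 ≤ L := by rw [hLdef]; linarith
  -- complex quantities
  set c : ℂ := (P:ℂ) * Complex.I with hc
  set z₀ : ℂ := c - (Real.log v₀ : ℂ) with hz₀
  set η : ℂ → ℂ := fun z => (c^2 - z^2)/(D:ℂ) with hη
  set Φ : ℂ → ℂ := fun z => z₀ - Complex.log (1 + η z) with hΦ
  set B : Set ℂ := Metric.closedBall z₀ 1 with hB
  have hc2 : c^2 = -((P^2 : ℝ):ℂ) := by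
    rw [hc]; push_cast; rw [mul_pow, Complex.I_sq]; ring
  have hcnorm : ‖c‖ = P := by
    rw [hc, norm_mul, Complex.norm_I, Complex.norm_real, Real.norm_eq_abs,
      abs_of_nonneg hP0, mul_one]
  have hDC : ‖(D:ℂ)‖ = D := by
    rw [Complex.norm_real, Real.norm_eq_abs, abs_of_pos hDpos]
  have hDC0 : (D:ℂ) ≠ 0 := by
    simpa using ne_of_gt hDpos
  -- basic estimates on the ball
  have hball : ∀ z ∈ B, ‖z - c‖ ≤ L ∧ ‖η z‖ ≤ 1/2 ∧ ‖z‖ ≤ L + P := by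
    intro z hz
    rw [hB, Metric.mem_closedBall, dist_eq_norm] at hz
    have h1 : ‖z - c‖ ≤ L := by
      have : z - c = (z - z₀) + (z₀ - c) := by ring
      rw [this]
      calc ‖(z - z₀) + (z₀ - c)‖ ≤ ‖z - z₀‖ + ‖z₀ - c‖ := norm_add_le _ _
        _ ≤ 1 + Real.log v₀ := by
            apply add_le_add hz
            rw [hz₀]
            simp only [sub_sub_cancel_left, norm_neg, Complex.norm_real, Real.norm_eq_abs]
            rw [abs_of_nonneg hlogv]
        _ = L := hLdef.symm
    have h2 : ‖z + c‖ ≤ L + 2*P := by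
      have : z + c = (z - c) + 2*c := by ring
      rw [this]
      calc ‖(z - c) + 2*c‖ ≤ ‖z - c‖ + ‖(2:ℂ)*c‖ := norm_add_le _ _
        _ ≤ L + 2*P := by
            rw [norm_mul, hcnorm]
            apply add_le_add h1
            norm_num
    refine ⟨h1, ?_, ?_⟩
    · rw [hη]
      simp only
      rw [norm_div, hDC]
      rw [div_le_iff₀ hDpos]
      have : c^2 - z^2 = (c - z) * (c + z) := by ring
      rw [this, norm_mul]
      have h3 : ‖c - z‖ = ‖z - c‖ := by rw [← norm_neg]; ring_nf
      have h4 : ‖c + z‖ = ‖z + c‖ := by rw [add_comm]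
      rw [h3, h4]
      calc ‖z - c‖ * ‖z + c‖ ≤ L * (L + 2*P) :=
            mul_le_mul h1 h2 (norm_nonneg _) (by linarith)
        _ ≤ D/2 := hF2
        _ = 1/2 * D := by ring
    · calc ‖z‖ = ‖(z - c) + c‖ := by ring_nf
        _ ≤ ‖z - c‖ + ‖c‖ := norm_add_le _ _
        _ ≤ L + P := by rw [hcnorm]; exact add_le_add h1 (le_refl P)
  have hslit : ∀ z ∈ B, (1/2 : ℝ) ≤ (1 + η z).re ∧ 1 + η z ∈ Complex.slitPlane
      ∧ 1 + η z ≠ 0 ∧ (1/2:ℝ) ≤ ‖1 + η z‖ := by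
    intro z hz
    obtain ⟨-, h2, -⟩ := hball z hz
    have hre : |(η z).re| ≤ 1/2 := le_trans (Complex.abs_re_le_norm _) h2
    have h3 : (1/2 : ℝ) ≤ (1 + η z).re := by
      rw [Complex.add_re, Complex.one_re]
      have := abs_le.mp hre
      linarith [this.1]
    refine ⟨h3, Or.inl (by linarith), ?_, ?_⟩
    · intro h
      rw [h] at h3
      simp at h3
      linarith
    · exact le_trans h3 (Complex.re_le_norm _)
  -- maps to
  have hmaps : Set.MapsTo Φ B B := by
    intro z hz
    obtain ⟨-, h2, -⟩ := hball z hz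
    rw [hB, Metric.mem_closedBall, dist_eq_norm]
    have : Φ z - z₀ = -Complex.log (1 + η z) := by rw [hΦ]; ring
    rw [this, norm_neg]
    calc ‖Complex.log (1 + η z)‖ ≤ 3/2 * ‖η z‖ :=
          Complex.norm_log_one_add_half_le_self h2
      _ ≤ 3/2 * (1/2) := by linarith
      _ ≤ 1 := by norm_num
  -- derivative bound and Lipschitz
  have hlip : LipschitzOnWith (1/2 : ℝ≥0) Φ B := by
    apply (convex_closedBall z₀ 1).lipschitzOnWith_of_nnnorm_hasDerivWithin_le
      (f' := fun z => -((1 + η z)⁻¹ * (-(2*z)/(D:ℂ))))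
    · intro z hz
      obtain ⟨-, hsl, -, -⟩ := hslit z hz
      have hpow : HasDerivAt (fun w : ℂ => c^2 - w^2) (-(2*z)) z := by
        simpa using (hasDerivAt_pow 2 z).const_sub (c^2)
      have hηd : HasDerivAt (fun w => 1 + η w) (-(2*z)/(D:ℂ)) z := by
        have h5 := (hpow.div_const (D:ℂ)).const_add 1
        simpa [hη] using h5
      have hlog2 : HasDerivAt (fun w => Complex.log (1 + η w))
          ((1 + η z)⁻¹ * (-(2*z)/(D:ℂ))) z :=
        by have h7 := (Complex.hasDerivAt_log hsl).comp z hηd; exact h7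
      have h6 : HasDerivAt Φ (-((1 + η z)⁻¹ * (-(2*z)/(D:ℂ)))) z := by
        simpa [hΦ] using hlog2.const_sub z₀
      exact h6.hasDerivWithinAt
    · intro z hz
      obtain ⟨-, h2, h3⟩ := hball z hz
      obtain ⟨-, -, -, h4⟩ := hslit z hz
      rw [← NNReal.coe_le_coe, coe_nnnorm]
      have hnu : ‖(1 + η z)⁻¹‖ ≤ 2 := by
        rw [norm_inv]
        calc ‖1 + η z‖⁻¹ ≤ (1/2 : ℝ)⁻¹ := by
              apply inv_anti₀ (by norm_num) h4
          _ = 2 := by norm_num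
      have hw : ‖-(2*z)/(D:ℂ)‖ ≤ 2*(L+P)/D := by
        rw [norm_div, norm_neg, norm_mul, hDC]
        gcongr
        · simpa using h3
      calc ‖-((1 + η z)⁻¹ * (-(2*z)/(D:ℂ)))‖ = ‖(1 + η z)⁻¹‖ * ‖-(2*z)/(D:ℂ)‖ := by
            rw [norm_neg, norm_mul]
        _ ≤ 2 * (2*(L+P)/D) :=
            mul_le_mul hnu hw (norm_nonneg _) (by norm_num)
        _ ≤ (1/2 : ℝ≥0) := by
            push_cast
            rw [show (2:ℝ) * (2*(L+P)/D) = 4*(L+P)/D by ring, div_le_iff₀ hDpos]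
            linarith
  -- Banach fixed point
  have hcontr : ContractingWith (1/2 : ℝ≥0) (hmaps.restrict Φ B B) :=
    ⟨by rw [← NNReal.coe_lt_coe]; norm_num, hlip.mapsToRestrict hmaps⟩
  have hz₀B : z₀ ∈ B := Metric.mem_closedBall_self (by norm_num)
  obtain ⟨y, hyB, hyfix, -, -⟩ := hcontr.exists_fixedPoint'
    (hB ▸ Metric.isClosed_closedBall.isComplete) hmaps hz₀B (edist_ne_top _ _)
  obtain ⟨-, hηy, -⟩ := hball y hyB
  obtain ⟨-, -, hne, -⟩ := hslit y hyB
  -- parity: exp(-c) = a/|a|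
  have hec : Complex.exp (-c) = ((a/|a| : ℝ):ℂ) := by
    have h1 : -c = ((-(m:ℤ) : ℤ):ℂ) * ((Real.pi : ℂ) * Complex.I) := by
      rw [hc, hP]; push_cast; ring
    rw [h1, Complex.exp_int_mul, Complex.exp_pi_mul_I]
    rcases ha.lt_or_gt with hneg | hpos
    · have hmodd : ¬ (0 < a) := not_lt.mpr (le_of_lt hneg)
      have hmval : m = 2*k + 1 := by rw [hm, if_neg hmodd]
      rw [zpow_neg, hmval, zpow_natCast, pow_succ, pow_mul]
      norm_num
      rw [abs_of_neg hneg]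
      have hac : (a:ℂ) ≠ 0 := by exact_mod_cast ha
      push_cast
      field_simp
    · have hmval : m = 2*k := by simp [hm, if_pos hpos]
      rw [zpow_neg, hmval, zpow_natCast, pow_mul]
      norm_num
      rw [abs_of_pos hpos]
      have hac : (a:ℂ) ≠ 0 := by exact_mod_cast ha
      rw [div_self hac]
  -- the fixed point is a root
  have hexp : Complex.exp (-y) = ((a/|a| : ℝ):ℂ) * (v₀:ℂ) * (1 + η y) := by
    have h1 : -y = -c + ((Real.log v₀ : ℝ):ℂ) + Complex.log (1 + η y) := by
      calc -y = -(Φ y) := by rw [hyfix]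
        _ = -c + ((Real.log v₀ : ℝ):ℂ) + Complex.log (1 + η y) := by
            rw [hΦ, hz₀]; ring
    rw [h1, Complex.exp_add, Complex.exp_add, Complex.exp_log hne, hec,
      ← Complex.ofReal_exp, Real.exp_log hv₀pos]
  have hay : (a:ℂ) * Complex.exp (-y) = (a:ℂ) - y^2 := by
    rw [hexp]
    have h2 : (a:ℂ) * ((a/|a| : ℝ):ℂ) * ((v₀:ℝ):ℂ) = (D:ℂ) := by
      rw [hv₀]
      push_cast
      have hAc : ((|a|:ℝ):ℂ) ≠ 0 := by exact_mod_cast ne_of_gt hA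
      have haa : ((a:ℂ))^2 = ((|a|:ℝ):ℂ)^2 := by
        exact_mod_cast congrArg (fun t : ℝ => (t:ℂ)) (sq_abs a).symm
      field_simp
      linear_combination haa
    calc (a:ℂ) * (((a/|a|:ℝ):ℂ) * ((v₀:ℝ):ℂ) * (1 + η y))
        = ((a:ℂ) * ((a/|a|:ℝ):ℂ) * ((v₀:ℝ):ℂ)) * (1 + η y) := by ring
      _ = (D:ℂ) * (1 + η y) := by rw [h2]
      _ = (D:ℂ) + (c^2 - y^2) := by
          rw [hη]
          simp only
          rw [mul_add, mul_one, mul_div_cancel₀ _ hDC0]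
      _ = (a:ℂ) - y^2 := by
          rw [hc2, hD]
          push_cast
          ring
  have hFa : Fa a y = 0 := by
    unfold Fa
    linear_combination hay
  -- size of the root
  have hyim : P - 1 ≤ y.im := by
    have h1 : ‖y - z₀‖ ≤ 1 := by
      rw [hB, Metric.mem_closedBall, dist_eq_norm] at hyB
      exact hyB
    have h2 : |(y - z₀).im| ≤ 1 := le_trans (Complex.abs_im_le_norm _) h1
    have h3 : (y - z₀).im = y.im - P := by
      rw [hz₀, hc]
      simp [Complex.sub_im, Complex.mul_im]
    rw [h3] at h2
    linarith [(abs_le.mp h2).1]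
  have hPR : R + 1 ≤ P - 1 := by linarith
  have hynorm : R < ‖y‖ := by
    calc R < R + 1 := by linarith
      _ ≤ P - 1 := hPR
      _ ≤ y.im := hyim
      _ ≤ |y.im| := le_abs_self _
      _ ≤ ‖y‖ := Complex.abs_im_le_norm y
  have hy0 : y ≠ 0 := by
    intro h
    rw [h] at hyim
    simp only [Complex.zero_im] at hyim
    linarith
  refine ⟨y, ?_, hynorm⟩
  rw [charRoots_eq a ha]
  exact ⟨hFa, hy0⟩

lemma halfplane_finite (a : ℝ) (ha : a ≠ 0) (c : ℝ) :
    {lam ∈ charRoots a | c ≤ lam.re}.Finite := by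
  apply (Fa_zeros_ball_finite a ha (Real.sqrt (|a| * (1 + Real.exp (-c))))).subset
  rintro z ⟨hz, hc⟩
  rw [charRoots_eq a ha] at hz
  refine ⟨hz.1, ?_⟩
  rw [Metric.mem_closedBall, dist_zero_right]
  rw [show ∀ x y : ℝ, (x ≤ Real.sqrt y) = (x ≤ Real.sqrt y) from fun _ _ => rfl]
  have hz2 : z^2 = (a:ℂ) - a * Complex.exp (-z) := by
    have := hz.1; unfold Fa at this; linear_combination this
  have hnorm : ‖z‖^2 ≤ |a| * (1 + Real.exp (-c)) := by
    have h1 : ‖z^2‖ = ‖z‖^2 := by rw [norm_pow]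
    rw [← h1, hz2]
    have h2 : ‖(a:ℂ) - a * Complex.exp (-z)‖ ≤ ‖(a:ℂ)‖ + ‖(a:ℂ)‖ * ‖Complex.exp (-z)‖ := by
      calc ‖(a:ℂ) - a * Complex.exp (-z)‖ ≤ ‖(a:ℂ)‖ + ‖(a:ℂ) * Complex.exp (-z)‖ :=
            norm_sub_le _ _
        _ = ‖(a:ℂ)‖ + ‖(a:ℂ)‖ * ‖Complex.exp (-z)‖ := by rw [norm_mul]
    have h3 : ‖Complex.exp (-z)‖ = Real.exp (-z.re) := by
      rw [Complex.norm_exp]; simp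
    have h4 : Real.exp (-z.re) ≤ Real.exp (-c) := Real.exp_le_exp.mpr (by linarith)
    have h5 : ‖(a:ℂ)‖ = |a| := by rw [Complex.norm_real, Real.norm_eq_abs]
    rw [h3, h5] at h2
    have h6 : 0 ≤ |a| := abs_nonneg a
    nlinarith
  have := Real.sqrt_le_sqrt hnorm
  rwa [Real.sqrt_sq (norm_nonneg z)] at this

/-- For `a ≠ 0`: `Λ_a` is countably infinite, consists of isolated points, for each
`c ∈ ℝ` the set `{λ ∈ Λ_a : Re λ ≥ c}` is finite; in particular the set of real parts
of elements of `Λ_a` is bounded above (i.e. `v₀(a) < ∞`). -/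
theorem charRoots_structure (a : ℝ) (ha : a ≠ 0) :
    (charRoots a).Countable ∧
    (charRoots a).Infinite ∧
    (∀ lam ∈ charRoots a, 𝓝[charRoots a \ {lam}] lam = ⊥) ∧
    (∀ c : ℝ, {lam ∈ charRoots a | c ≤ lam.re}.Finite) ∧
    BddAbove (Complex.re '' charRoots a) := by
  have hfin := halfplane_finite a ha
  have hcount : (charRoots a).Countable := by
    have hcover : charRoots a = ⋃ n : ℕ, {lam ∈ charRoots a | (-(n:ℝ)) ≤ lam.re} := by
      ext z
      simp only [Set.mem_iUnion, Set.mem_setOf_eq]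
      constructor
      · intro hz
        obtain ⟨n, hn⟩ := exists_nat_ge (-z.re)
        exact ⟨n, hz, by linarith⟩
      · rintro ⟨n, hn, -⟩; exact hn
    rw [hcover]
    exact Set.countable_iUnion (fun n => (hfin _).countable)
  refine ⟨hcount, ?_, ?_, hfin, ?_⟩
  · -- Infinite
    intro hfin'
    obtain ⟨R, hR⟩ := (hfin'.image (fun z : ℂ => ‖z‖)).bddAbove
    obtain ⟨z, hz, hz2⟩ := exists_root_large a ha R
    exact absurd (hR (Set.mem_image_of_mem _ hz)) (not_le.mpr hz2)
  · -- isolated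
    intro lam hlam
    set T := charRoots a \ {lam} with hT
    set G := {x ∈ charRoots a | lam.re - 1 ≤ x.re} \ {lam} with hG
    have hGfin : G.Finite := (hfin (lam.re - 1)).diff
    have hU : {x : ℂ | lam.re - 1 < x.re} ∈ 𝓝 lam := by
      apply IsOpen.mem_nhds
      · exact isOpen_lt continuous_const Complex.continuous_re
      · simp only [Set.mem_setOf_eq]; linarith
    rw [nhdsWithin_restrict' T hU]
    have hsub : T ∩ {x : ℂ | lam.re - 1 < x.re} ⊆ G := by
      rintro x ⟨⟨hx1, hx2⟩, hx3⟩
      exact ⟨⟨hx1, le_of_lt hx3⟩, hx2⟩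
    refine le_antisymm ?_ bot_le
    calc 𝓝[T ∩ {x : ℂ | lam.re - 1 < x.re}] lam ≤ 𝓝[G] lam := nhdsWithin_mono _ hsub
      _ = ⊥ := by
        rw [← not_neBot, ← mem_closure_iff_nhdsWithin_neBot,
          hGfin.isClosed.closure_eq]
        simp [hG]
  · -- BddAbove
    have h0 : Complex.re '' charRoots a ⊆ Set.Iic (0:ℝ) ∪ Complex.re '' {lam ∈ charRoots a | 0 ≤ lam.re} := by
      rintro x ⟨z, hz, rfl⟩
      by_cases h : 0 ≤ z.re
      · exact Or.inr ⟨z, ⟨hz, h⟩, rfl⟩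
      · exact Or.inl (le_of_lt (not_le.mp h))
    exact (BddAbove.union bddAbove_Iic ((hfin 0).image _).bddAbove).mono h0
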